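/- Let G be a finite group, N a nontrivial proper normal subgroup of G. Then D^s(G) ≤ 2·D^s(G/N)·D^s(N) + D^s(G/N) + D^s(N) ≤ 4·D^s(G/N)·D^s(N), where D^s denotes the maximum symmetric diameter over all generating sets. -/

import Mathlib

open Subgroup

/-- Minimal length of a word over `X` (positive letters only) representing `g`. -/
noncomputable def wLen {G : Type*} [Group G] (X : Set G) (g : G) : ℕ :=
  sInf {n | ∃ l : List G, (∀ x ∈ l, x ∈ X) ∧ l.length = n ∧ l.prod = g}

/-- Minimal length of a word over `X ∪ X⁻¹` representing `g`. -/
noncomputable def sLen {G : Type*} [Group G] (X : Set G) (g : G) : ℕ :=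
  sInf {n | ∃ l : List G, (∀ x ∈ l, x ∈ X ∨ x⁻¹ ∈ X) ∧ l.length = n ∧ l.prod = g}

/-- Diameter of `G` with respect to `X` (positive words). -/
noncomputable def diamW (G : Type*) [Group G] (X : Set G) : ℕ :=
  sSup (Set.range (wLen X))

/-- Symmetric diameter of `G` with respect to `X`. -/
noncomputable def diamS (G : Type*) [Group G] (X : Set G) : ℕ :=
  sSup (Set.range (sLen X))

/-- Maximum diameter over all generating sets. -/
noncomputable def DW (G : Type*) [Group G] : ℕ :=
  sSup {d | ∃ X : Set G, Subgroup.closure X = ⊤ ∧ d = diamW G X}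

/-- Maximum symmetric diameter over all generating sets. -/
noncomputable def DS (G : Type*) [Group G] : ℕ :=
  sSup {d | ∃ X : Set G, Subgroup.closure X = ⊤ ∧ d = diamS G X}

/-- Minimal size of a generating set of `G`. -/
noncomputable def rk (G : Type*) [Group G] : ℕ :=
  sInf {n | ∃ S : Finset G, S.card = n ∧ Subgroup.closure (S : Set G) = ⊤}

section aux
variable {H : Type*} [Group H]

/-- `g` is represented by a word over `X ∪ X⁻¹` of length at most `k`. -/
def HasWordS (X : Set H) (k : ℕ) (g : H) : Prop :=
  ∃ l : List H, (∀ x ∈ l, x ∈ X ∨ x⁻¹ ∈ X) ∧ l.length ≤ k ∧ l.prod = g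

lemma hws_mono {X : Set H} {k m : ℕ} {g : H} (h : HasWordS X k g) (hkm : k ≤ m) :
    HasWordS X m g := by
  obtain ⟨l, h1, h2, h3⟩ := h; exact ⟨l, h1, h2.trans hkm, h3⟩

lemma hws_one (X : Set H) (k : ℕ) : HasWordS X k 1 := ⟨[], by simp, by simp, by simp⟩

lemma hws_letter {X : Set H} {x : H} (hx : x ∈ X ∨ x⁻¹ ∈ X) : HasWordS X 1 x :=
  ⟨[x], by simpa using hx, by simp, by simp⟩

lemma hws_mul {X : Set H} {k m : ℕ} {g g' : H} (h : HasWordS X k g) (h' : HasWordS X m g') :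
    HasWordS X (k + m) (g * g') := by
  obtain ⟨l, h1, h2, h3⟩ := h; obtain ⟨l', h1', h2', h3'⟩ := h'
  refine ⟨l ++ l', ?_, by simpa using Nat.add_le_add h2 h2', by simp [h3, h3']⟩
  intro x hx; rcases List.mem_append.1 hx with h | h
  exacts [h1 x h, h1' x h]

lemma hws_inv {X : Set H} {k : ℕ} {g : H} (h : HasWordS X k g) : HasWordS X k g⁻¹ := by
  obtain ⟨l, h1, h2, h3⟩ := h
  refine ⟨(l.map (·⁻¹)).reverse, ?_, by simpa using h2, ?_⟩
  · intro x hx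
    simp only [List.mem_reverse, List.mem_map] at hx
    obtain ⟨y, hy, rfl⟩ := hx
    rcases h1 y hy with h | h
    · right; simpa using h
    · left; exact h
  · rw [← h3]; exact (List.prod_inv_reverse l).symm

lemma sLen_le_of_hws {X : Set H} {k : ℕ} {g : H} (h : HasWordS X k g) : sLen X g ≤ k := by
  obtain ⟨l, h1, h2, h3⟩ := h
  exact le_trans (Nat.sInf_le ⟨l, h1, rfl, h3⟩) h2

lemma exists_word {X : Set H} (hX : closure X = ⊤) (g : H) :
    ∃ l : List H, (∀ x ∈ l, x ∈ X ∨ x⁻¹ ∈ X) ∧ l.prod = g := by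
  have hg : g ∈ closure X := hX ▸ mem_top g
  induction hg using closure_induction with
  | mem x hx => exact ⟨[x], by simpa using Or.inl hx, by simp⟩
  | one => exact ⟨[], by simp, by simp⟩
  | mul x y hx hy ihx ihy =>
    obtain ⟨l, h1, h2⟩ := ihx; obtain ⟨l', h1', h2'⟩ := ihy
    refine ⟨l ++ l', ?_, by simp [h2, h2']⟩
    intro x hx; rcases List.mem_append.1 hx with h | h
    exacts [h1 x h, h1' x h]
  | inv x hx ih =>
    obtain ⟨l, h1, h2⟩ := ih
    obtain ⟨l', h1', h2', h3'⟩ := hws_inv (g := x) ⟨l, h1, le_refl _, h2⟩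
    exact ⟨l', h1', h3'⟩

lemma hws_sLen {X : Set H} (hX : closure X = ⊤) (g : H) : HasWordS X (sLen X g) g := by
  obtain ⟨l, h1, h2⟩ := exists_word hX g
  have hne : {n | ∃ l : List H, (∀ x ∈ l, x ∈ X ∨ x⁻¹ ∈ X) ∧ l.length = n ∧ l.prod = g}.Nonempty :=
    ⟨l.length, l, h1, rfl, h2⟩
  obtain ⟨l', h1', h2', h3'⟩ := Nat.sInf_mem hne
  exact ⟨l', h1', h2'.le, h3'⟩

lemma sLen_le_card [Finite H] {X : Set H} (hX : closure X = ⊤) (g : H) :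
    sLen X g ≤ Nat.card H := by
  by_contra hlt
  push_neg at hlt
  obtain ⟨l, h1, h2, h3⟩ := hws_sLen hX g
  set n := sLen X g with hn
  have hlen : l.length = n := le_antisymm h2 (sLen_le_of_hws ⟨l, h1, le_refl _, h3⟩)
  have := Fintype.ofFinite H
  have hcard : Fintype.card H < Fintype.card (Fin (n + 1)) := by
    rw [Fintype.card_fin, ← Nat.card_eq_fintype_card]; omega
  obtain ⟨i, j, hij, hfe⟩ :=
    Fintype.exists_ne_map_eq_of_card_lt (fun i : Fin (n + 1) => (l.take i).prod) hcard
  wlog hlt' : (i : ℕ) < (j : ℕ) generalizing i j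
  · have hne : (i : ℕ) ≠ (j : ℕ) := fun h => hij (Fin.ext h)
    exact this j i hij.symm hfe.symm (by omega)
  · have hsh : sLen X g ≤ (l.take i ++ l.drop j).length := by
      apply sLen_le_of_hws
      refine ⟨l.take i ++ l.drop j, ?_, le_refl _, ?_⟩
      · intro x hx; rcases List.mem_append.1 hx with h | h
        exacts [h1 x (List.mem_of_mem_take h), h1 x (List.mem_of_mem_drop h)]
      · rw [List.prod_append, hfe, ← h3, List.prod_take_mul_prod_drop]
    rw [List.length_append, List.length_take, List.length_drop, hlen] at hsh
    have hj : (j : ℕ) ≤ n := by omega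
    rw [← hn] at hsh
    have : min (i : ℕ) n = (i : ℕ) := by omega
    omega

lemma sLen_le_diamS [Finite H] (X : Set H) (g : H) : sLen X g ≤ diamS H X :=
  le_csSup (Set.Finite.bddAbove (Set.finite_range _)) ⟨g, rfl⟩

lemma diamS_le_card [Finite H] {X : Set H} (hX : closure X = ⊤) : diamS H X ≤ Nat.card H := by
  apply csSup_le (Set.range_nonempty _)
  rintro d ⟨g, rfl⟩; exact sLen_le_card hX g

lemma bddAbove_DS [Finite H] : BddAbove {d | ∃ X : Set H, closure X = ⊤ ∧ d = diamS H X} :=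
  ⟨Nat.card H, by rintro d ⟨X, hX, rfl⟩; exact diamS_le_card hX⟩

lemma diamS_le_DS [Finite H] {X : Set H} (hX : closure X = ⊤) : diamS H X ≤ DS H :=
  le_csSup bddAbove_DS ⟨X, hX, rfl⟩

lemma one_le_DS [Finite H] [Nontrivial H] : 1 ≤ DS H := by
  obtain ⟨h, hh⟩ := exists_ne (1 : H)
  have h1 : 1 ≤ sLen (Set.univ : Set H) h := by
    rw [Nat.one_le_iff_ne_zero]
    intro h0
    rcases Nat.sInf_eq_zero.1 h0 with hmem | hemp
    · obtain ⟨l, _, hl, hp⟩ := hmem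
      rw [List.length_eq_zero_iff] at hl; subst hl; simp at hp; exact hh hp.symm
    · have hne : (1 : ℕ) ∈ {n | ∃ l : List H,
          (∀ x ∈ l, x ∈ (Set.univ : Set H) ∨ x⁻¹ ∈ (Set.univ : Set H)) ∧
          l.length = n ∧ l.prod = h} := ⟨[h], by simp, by simp, by simp⟩
      rw [hemp] at hne; exact hne
  calc 1 ≤ sLen (Set.univ : Set H) h := h1
    _ ≤ diamS H Set.univ := sLen_le_diamS _ _
    _ ≤ DS H := diamS_le_DS closure_univ

end aux

section key
variable {G : Type*} [Group G] [Finite G]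

omit [Finite G] in
lemma lift_word (N : Subgroup G) [N.Normal] {X : Set G}
    (lb : List (G ⧸ N)) (hlb : ∀ q ∈ lb, q ∈ (QuotientGroup.mk' N) '' X ∨
      q⁻¹ ∈ (QuotientGroup.mk' N) '' X) :
    ∃ w : List G, (∀ x ∈ w, x ∈ X ∨ x⁻¹ ∈ X) ∧ w.length = lb.length ∧
      QuotientGroup.mk' N w.prod = lb.prod := by
  induction lb with
  | nil => exact ⟨[], by simp, by simp, by simp⟩
  | cons q lb ih =>
    obtain ⟨w, hw1, hw2, hw3⟩ := ih (fun q hq => hlb q (List.mem_cons_of_mem _ hq))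
    rcases hlb q List.mem_cons_self with ⟨x, hx, hxq⟩ | ⟨x, hx, hxq⟩
    · refine ⟨x :: w, ?_, by simp [hw2],
        by rw [List.prod_cons, List.prod_cons, map_mul, hw3, hxq]⟩
      intro y hy; rcases List.mem_cons.1 hy with rfl | hy
      exacts [Or.inl hx, hw1 y hy]
    · refine ⟨x⁻¹ :: w, ?_, by simp [hw2], ?_⟩
      · intro y hy; rcases List.mem_cons.1 hy with rfl | hy
        exacts [Or.inr (by simpa using hx), hw1 y hy]
      · have : QuotientGroup.mk' N x⁻¹ = q := by
          rw [map_inv, hxq, inv_inv]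
        rw [List.prod_cons, List.prod_cons, map_mul, hw3, this]

lemma key (N : Subgroup G) [N.Normal] {X : Set G} (hX : closure X = ⊤) (g : G) :
    sLen X g ≤ 2 * DS (G ⧸ N) * DS ↥N + DS (G ⧸ N) + DS ↥N := by
  classical
  set π := QuotientGroup.mk' N with hπ
  set a := DS (G ⧸ N) with ha
  set b := DS ↥N with hb
  have hker : ∀ c : G, π c = 1 ↔ c ∈ N := fun c => QuotientGroup.eq_one_iff c
  -- the image of X generates the quotient
  have hXbar : closure (π '' X) = ⊤ := by
    rw [← MonoidHom.map_closure, hX, Subgroup.map_top_of_surjective π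
      (QuotientGroup.mk'_surjective N)]
  -- every element of G has a short representative modulo N
  have rep : ∀ c : G, ∃ s : G, HasWordS X a s ∧ π s = π c := by
    intro c
    obtain ⟨lb, h1, h2, h3⟩ := hws_sLen hXbar (π c)
    have h2' : lb.length ≤ a :=
      h2.trans ((sLen_le_diamS _ _).trans (diamS_le_DS hXbar))
    obtain ⟨w, hw1, hw2, hw3⟩ := lift_word N lb h1
    exact ⟨w.prod, ⟨w, hw1, by omega, rfl⟩, by rw [hw3, h3]⟩
  choose σ hσw hσπ using rep
  -- generating set for N
  set Y : Set ↥N := {y | HasWordS X (2 * a + 1) (y : G)} with hY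
  have hclY : closure Y = ⊤ := by
    rw [eq_top_iff']
    intro nn
    obtain ⟨u, hu1, hu2⟩ := exists_word hX (nn : G)
    have claim : ∀ u : List G, (∀ x ∈ u, x ∈ X ∨ x⁻¹ ∈ X) →
        ∃ z : ↥N, z ∈ closure Y ∧ (z : G) = u.prod * (σ u.prod)⁻¹ := by
      intro u hu
      induction u using List.reverseRecOn with
      | nil =>
        have hz : σ (List.prod []) ∈ N := by
          rw [← hker]; rw [hσπ]; simp [map_one]
        have hzY : (⟨σ (List.prod []), hz⟩ : ↥N) ∈ Y :=
          hws_mono (hσw (List.prod [])) (by omega)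
        refine ⟨(⟨σ (List.prod []), hz⟩ : ↥N)⁻¹, inv_mem (subset_closure hzY), ?_⟩
        simp
      | append_singleton u x ih =>
        obtain ⟨z, hz, hzeq⟩ := ih (fun y hy => hu y (by simp [hy]))
        have hxl : x ∈ X ∨ x⁻¹ ∈ X := hu x (by simp)
        have htm : σ u.prod * x * (σ (u.prod * x))⁻¹ ∈ N := by
          rw [← hker]
          simp only [map_mul, map_inv, hσπ]
          group
        have htY : (⟨σ u.prod * x * (σ (u.prod * x))⁻¹, htm⟩ : ↥N) ∈ Y := by
          have := hws_mul (hws_mul (hσw u.prod) (hws_letter hxl)) (hws_inv (hσw (u.prod * x)))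
          exact hws_mono this (by omega)
        refine ⟨z * ⟨_, htm⟩, mul_mem hz (subset_closure htY), ?_⟩
        push_cast [hzeq]
        rw [List.prod_append, List.prod_singleton]
        group
    obtain ⟨z, hz, hzeq⟩ := claim u hu1
    have hσn : σ (nn : G) ∈ N := by
      rw [← hker, hσπ, hker]; exact nn.2
    have hzY : (⟨σ (nn : G), hσn⟩ : ↥N) ∈ Y := hws_mono (hσw _) (by omega)
    have : nn = z * ⟨σ (nn : G), hσn⟩ := by
      ext; push_cast [hzeq, hu2]; group
    rw [this]
    exact mul_mem hz (subset_closure hzY)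
  -- convert words over Y to words over X
  have conv : ∀ L : List ↥N, (∀ y ∈ L, y ∈ Y ∨ y⁻¹ ∈ Y) →
      HasWordS X (L.length * (2 * a + 1)) ((L.prod : ↥N) : G) := by
    intro L hL
    induction L with
    | nil => simpa using hws_one X 0
    | cons y L ih =>
      have hy : HasWordS X (2 * a + 1) ((y : ↥N) : G) := by
        rcases hL y List.mem_cons_self with h | h
        · exact h
        · have := hws_inv (h : HasWordS X (2 * a + 1) ((y⁻¹ : ↥N) : G))
          simpa using this
      have hrest := ih (fun z hz => hL z (List.mem_cons_of_mem _ hz))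
      have := hws_mul hy hrest
      have heq : ((List.prod (y :: L) : ↥N) : G) = (y : G) * ((L.prod : ↥N) : G) := by
        push_cast; rfl
      rw [← heq] at this
      exact hws_mono this (by rw [List.length_cons]; ring_nf; omega)
  -- assemble
  have hsN : (σ g)⁻¹ * g ∈ N := by
    rw [← hker, map_mul, map_inv, hσπ]; group
  set nn : ↥N := ⟨(σ g)⁻¹ * g, hsN⟩ with hnn
  obtain ⟨L, hL1, hL2, hL3⟩ := hws_sLen hclY nn
  have hL2' : L.length ≤ b := hL2.trans ((sLen_le_diamS _ _).trans (diamS_le_DS hclY))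
  have hw : HasWordS X (b * (2 * a + 1)) ((σ g)⁻¹ * g) := by
    have := conv L hL1
    rw [hL3] at this
    exact hws_mono (by simpa [hnn] using this) (Nat.mul_le_mul_right _ hL2')
  have hg : HasWordS X (a + b * (2 * a + 1)) g := by
    have := hws_mul (hσw g) hw
    simpa using this
  have := sLen_le_of_hws hg
  have heq : a + b * (2 * a + 1) = 2 * a * b + a + b := by ring
  omega

end key

theorem stmt14 {G : Type*} [Group G] [Finite G] (N : Subgroup G) [N.Normal]
    (hbot : N ≠ ⊥) (htop : N ≠ ⊤) :
    DS G ≤ 2 * DS (G ⧸ N) * DS ↥N + DS (G ⧸ N) + DS ↥N ∧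
      2 * DS (G ⧸ N) * DS ↥N + DS (G ⧸ N) + DS ↥N ≤ 4 * DS (G ⧸ N) * DS ↥N := by
  constructor
  · refine csSup_le ⟨diamS G Set.univ, ⟨Set.univ, closure_univ, rfl⟩⟩ ?_
    rintro d ⟨X, hX, rfl⟩
    refine csSup_le (Set.range_nonempty _) ?_
    rintro d ⟨g, rfl⟩
    exact key N hX g
  · have hQ : Nontrivial (G ⧸ N) := by
      have hex : ∃ g : G, g ∉ N := by
        by_contra h; push_neg at h
        exact htop ((Subgroup.eq_top_iff' N).2 h)
      obtain ⟨g, hg⟩ := hex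
      exact ⟨⟨(g : G ⧸ N), 1, fun h => hg ((QuotientGroup.eq_one_iff g).1 h)⟩⟩
    have hN : Nontrivial ↥N := (Subgroup.nontrivial_iff_ne_bot N).2 hbot
    have ha := one_le_DS (H := G ⧸ N)
    have hb := one_le_DS (H := ↥N)
    set a := DS (G ⧸ N)
    set b := DS ↥N
    have h1 : a ≤ a * b := Nat.le_mul_of_pos_right a (by omega)
    have h2 : b ≤ a * b := Nat.le_mul_of_pos_left b (by omega)
    nlinarith
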